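/- Let H be an Arf numerical semigroup and let H₁, …, H_r be Arf numerical semigroups each containing H. The following are equivalent: (1) H = H₁ ∩ ⋯ ∩ H_r; (2) for every Arf special gap x ∈ ArfG(H) there exists i ∈ {1, …, r} with x ∉ H_i. -/

import Mathlib

/-- A numerical semigroup: a subset of ℕ containing 0, closed under addition,
with finite complement. -/
def IsNumericalSemigroup (H : Set ℕ) : Prop :=
  0 ∈ H ∧ (∀ a ∈ H, ∀ b ∈ H, a + b ∈ H) ∧ (Hᶜ : Set ℕ).Finite

/-- An Arf numerical semigroup: for all a ≥ b ≥ c in H, a + b - c ∈ H. -/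
def IsArfSemigroup (H : Set ℕ) : Prop :=
  IsNumericalSemigroup H ∧
    ∀ a ∈ H, ∀ b ∈ H, ∀ c ∈ H, c ≤ b → b ≤ a → a + b - c ∈ H

/-- The special gaps of H. -/
def SpecialGaps (H : Set ℕ) : Set ℕ :=
  {x | x ∉ H ∧ IsNumericalSemigroup (H ∪ {x})}

/-- The Arf special gaps of H. -/
def ArfSpecialGaps (H : Set ℕ) : Set ℕ :=
  {x | x ∉ H ∧ IsArfSemigroup (H ∪ {x})}

/-- The Frobenius number of H (the largest gap; meaningful when H ≠ ℕ). -/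
noncomputable def Frobenius (H : Set ℕ) : ℕ := sSup Hᶜ

/-- An irreducible numerical semigroup. -/
def IsIrreducibleNS (H : Set ℕ) : Prop :=
  IsNumericalSemigroup H ∧
    ¬ ∃ H₁ H₂ : Set ℕ, IsNumericalSemigroup H₁ ∧ IsNumericalSemigroup H₂ ∧
      H ⊂ H₁ ∧ H ⊂ H₂ ∧ H = H₁ ∩ H₂

/-- An Arf-irreducible numerical semigroup. -/
def ArfIrreducible (H : Set ℕ) : Prop :=
  IsArfSemigroup H ∧
    ¬ ∃ H₁ H₂ : Set ℕ, IsArfSemigroup H₁ ∧ IsArfSemigroup H₂ ∧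
      H ⊂ H₁ ∧ H ⊂ H₂ ∧ H = H₁ ∩ H₂

/-- The set of Arf numerical semigroups containing H. -/
def ArfOver (H : Set ℕ) : Set (Set ℕ) := {S | IsArfSemigroup S ∧ H ⊆ S}

/-- The set of Arf-irreducible numerical semigroups containing H. -/
def QA (H : Set ℕ) : Set (Set ℕ) := {S | ArfIrreducible S ∧ H ⊆ S}

/-- A variety of numerical semigroups. -/
def IsVariety (Ψ : Set (Set ℕ)) : Prop :=
  Ψ.Nonempty ∧ (∀ S ∈ Ψ, IsNumericalSemigroup S) ∧
    (∀ S ∈ Ψ, ∀ S' : Set ℕ, IsNumericalSemigroup S' → S ⊆ S' → S' ∈ Ψ) ∧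
    (∀ S ∈ Ψ, ∀ S' ∈ Ψ, S ∩ S' ∈ Ψ)

/-- The variety generated by a family of numerical semigroups. -/
def GeneratedVariety (F : Set (Set ℕ)) : Set (Set ℕ) :=
  ⋂₀ {Ψ | IsVariety Ψ ∧ F ⊆ Ψ}

/-- For Arf numerical semigroups H₁,…,H_r containing the Arf numerical semigroup H:
H = H₁ ∩ ⋯ ∩ H_r iff every Arf special gap of H is missing from some H_i. -/
theorem eq_iInter_iff_arfSpecialGaps (H : Set ℕ) (hH : IsArfSemigroup H)
    (r : ℕ) (f : Fin r → Set ℕ)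
    (hf : ∀ i, IsArfSemigroup (f i) ∧ H ⊆ f i) :
    H = ⋂ i, f i ↔ ∀ x ∈ ArfSpecialGaps H, ∃ i, x ∉ f i := by
  constructor
  · rintro rfl x ⟨hx, _⟩
    by_contra h
    push_neg at h
    exact hx (Set.mem_iInter.mpr h)
  · intro hgaps
    have hsub : H ⊆ ⋂ i, f i := Set.subset_iInter fun i => (hf i).2
    refine Set.Subset.antisymm hsub ?_
    by_contra hns
    have hSne : ((⋂ i, f i) \ H).Nonempty := by
      obtain ⟨a, ha, haH⟩ := Set.not_subset.mp hns
      exact ⟨a, ha, haH⟩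
    have hSfin : ((⋂ i, f i) \ H).Finite :=
      hH.1.2.2.subset fun y hy => hy.2
    obtain ⟨x, hxS, hxmax⟩ := Set.Finite.exists_maximalFor id _ hSfin hSne
    obtain ⟨hxI, hxH⟩ := hxS
    have hmax : ∀ y ∈ ⋂ i, f i, x < y → y ∈ H := by
      intro y hy hlt
      by_contra hyH
      have := hxmax (j := y) ⟨hy, hyH⟩ (le_of_lt hlt)
      simp only [id] at this
      omega
    have hxpos : 0 < x := by
      rcases Nat.eq_zero_or_pos x with h0 | h; · exact absurd (h0 ▸ hH.1.1) hxH
      exact h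
    have hunionI : H ∪ {x} ⊆ ⋂ i, f i := by
      rintro y (hy | hy)
      · exact hsub hy
      · rwa [Set.mem_singleton_iff.mp hy]
    have Iadd : ∀ a ∈ ⋂ i, f i, ∀ b ∈ ⋂ i, f i, a + b ∈ ⋂ i, f i := by
      intro a ha b hb
      exact Set.mem_iInter.mpr fun i =>
        (hf i).1.1.2.1 a (Set.mem_iInter.mp ha i) b (Set.mem_iInter.mp hb i)
    have Iarf : ∀ a ∈ ⋂ i, f i, ∀ b ∈ ⋂ i, f i, ∀ c ∈ ⋂ i, f i,
        c ≤ b → b ≤ a → a + b - c ∈ ⋂ i, f i := by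
      intro a ha b hb c hc hcb hba
      exact Set.mem_iInter.mpr fun i =>
        (hf i).1.2 a (Set.mem_iInter.mp ha i) b (Set.mem_iInter.mp hb i)
          c (Set.mem_iInter.mp hc i) hcb hba
    have hbig : ∀ y ∈ ⋂ i, f i, x ≤ y → y ∈ H ∪ {x} := by
      intro y hy hle
      rcases eq_or_lt_of_le hle with h | h
      · exact Or.inr (Set.mem_singleton_iff.mpr h.symm)
      · exact Or.inl (hmax y hy h)
    have hxgap : x ∈ ArfSpecialGaps H := by
      refine ⟨hxH, ⟨Or.inl hH.1.1, ?_, ?_⟩, ?_⟩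
      · -- additive closure
        rintro a (ha | ha) b (hb | hb)
        · exact Or.inl (hH.1.2.1 a ha b hb)
        · rw [Set.mem_singleton_iff] at hb; subst hb
          rcases Nat.eq_zero_or_pos a with h0 | h0
          · subst h0; simp
          · exact Or.inl (hmax _ (Iadd _ (hunionI (Or.inl ha)) _ hxI) (by omega))
        · rw [Set.mem_singleton_iff] at ha; subst ha
          rcases Nat.eq_zero_or_pos b with h0 | h0
          · subst h0; simp
          · exact Or.inl (hmax _ (Iadd _ hxI _ (hunionI (Or.inl hb))) (by omega))
        · rw [Set.mem_singleton_iff] at ha hb; subst ha; subst hb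
          exact Or.inl (hmax _ (Iadd _ hxI _ hxI) (by omega))
      · exact hH.1.2.2.subset (Set.compl_subset_compl.mpr Set.subset_union_left)
      · -- Arf condition
        intro a ha b hb c hc hcb hba
        by_cases hall : a ∈ H ∧ b ∈ H ∧ c ∈ H
        · exact Or.inl (hH.2 a hall.1 b hall.2.1 c hall.2.2 hcb hba)
        · have hmem := Iarf a (hunionI ha) b (hunionI hb) c (hunionI hc) hcb hba
          have hx' : a = x ∨ b = x ∨ c = x := by
            by_contra hno
            push_neg at hno
            rcases ha with ha | ha
            · rcases hb with hb | hb
              · rcases hc with hc | hc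
                · exact hall ⟨ha, hb, hc⟩
                · exact hno.2.2 (Set.mem_singleton_iff.mp hc)
              · exact hno.2.1 (Set.mem_singleton_iff.mp hb)
            · exact hno.1 (Set.mem_singleton_iff.mp ha)
          have hge : x ≤ a + b - c := by omega
          exact hbig _ hmem hge
    obtain ⟨i, hi⟩ := hgaps x hxgap
    exact hi (Set.mem_iInter.mp hxI i)
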